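/- Assume F has bounded variation along x̄ uniformly over A, with δ̄ > 0 such that η^{δ̄}(T) < +∞, and assume hypotheses (C1) and (C2). Take δ ∈ (0, δ̄). Then there exists a countable set 𝒜 ⊂ (S,T) such that for every t ∈ (S,T) \ 𝒜, lim_{t'→t} sup{ d_H(F(t',x,a), F(t,x,a)) : x ∈ x̄(t) + δB, a ∈ A } = 0; that is, t ↦ F(t,·,·) is continuous at t in Hausdorff distance, uniformly over x in the δ-ball about x̄(t) and a ∈ A. -/

import Mathlib

open Set Metric Filter MeasureTheory
open scoped ENNReal Topology Classical

noncomputable section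

/-- Euclidean space `ℝ^n`. -/
abbrev Eucl (n : ℕ) : Type := EuclideanSpace ℝ (Fin n)

/-- A (strict) partition `a = τ 0 < τ 1 < ⋯ < τ N = b` of the interval `[a,b]`. -/
def IsPartition (a b : ℝ) (N : ℕ) (τ : ℕ → ℝ) : Prop :=
  0 < N ∧ τ 0 = a ∧ τ N = b ∧ ∀ i < N, τ i < τ (i + 1)

/-- The mesh (diameter) of the partition `τ` is at most `ε`. -/
def MeshLE (N : ℕ) (τ : ℕ → ℝ) (ε : ℝ) : Prop :=
  ∀ i < N, τ (i + 1) - τ i ≤ ε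

/-- The tube `x̄([s,t]) + δ B` around the arc `x̄` on `[s,t]`. -/
def tube {n : ℕ} (xbar : ℝ → Eucl n) (s t δ : ℝ) : Set (Eucl n) :=
  {y | ∃ r ∈ Icc s t, dist y (xbar r) ≤ δ}

/-- `I^δ(𝒯) = Σᵢ sup { d_H (F(t_{i+1},x,a), F(t_i,x,a)) : x ∈ x̄([t_i,t_{i+1}]) + δB, a ∈ A }`. -/
def variSum {n k : ℕ} (F : ℝ → Eucl n → Eucl k → Set (Eucl n)) (xbar : ℝ → Eucl n)
    (A : Set (Eucl k)) (δ : ℝ) (N : ℕ) (τ : ℕ → ℝ) : ℝ≥0∞ :=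
  ∑ i ∈ Finset.range N,
    ⨆ x ∈ tube xbar (τ i) (τ (i + 1)) δ, ⨆ a ∈ A,
      EMetric.hausdorffEdist (F (τ (i + 1)) x a) (F (τ i) x a)

/-- `η^δ_ε(t)`: the `(δ,ε)`-perturbed cumulative variation of `F` along `x̄`, uniformly
over `A`, on the base interval `[S,t]`.  (For `t = S` there are no partitions and the
supremum is `0`.) -/
def etaE {n k : ℕ} (F : ℝ → Eucl n → Eucl k → Set (Eucl n)) (xbar : ℝ → Eucl n)
    (A : Set (Eucl k)) (S δ ε t : ℝ) : ℝ≥0∞ :=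
  ⨆ (N : ℕ) (τ : ℕ → ℝ) (_ : IsPartition S t N τ) (_ : MeshLE N τ ε),
    variSum F xbar A δ N τ

/-- `η^δ(t) = lim_{ε ↓ 0} η^δ_ε(t)` (the limit of a monotone family: the infimum). -/
def etaD {n k : ℕ} (F : ℝ → Eucl n → Eucl k → Set (Eucl n)) (xbar : ℝ → Eucl n)
    (A : Set (Eucl k)) (S δ t : ℝ) : ℝ≥0∞ :=
  ⨅ (ε : ℝ) (_ : 0 < ε), etaE F xbar A S δ ε t

/-- `η(t) = lim_{δ ↓ 0} η^δ(t)`: the cumulative variation function of `F` along `x̄`,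
uniformly over `A`. -/
def eta {n k : ℕ} (F : ℝ → Eucl n → Eucl k → Set (Eucl n)) (xbar : ℝ → Eucl n)
    (A : Set (Eucl k)) (S t : ℝ) : ℝ≥0∞ :=
  ⨅ (δ : ℝ) (_ : 0 < δ), etaD F xbar A S δ t

/-- Hypothesis (C1): nonempty closed values, measurability in `t`, and uniform
boundedness `F(t,x,a) ⊆ cB` near the arc. -/
def HypC1 {n k : ℕ} (F : ℝ → Eucl n → Eucl k → Set (Eucl n)) (xbar : ℝ → Eucl n)
    (A : Set (Eucl k)) (S T δbar : ℝ) : Prop :=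
  (∀ t x a, (F t x a).Nonempty ∧ IsClosed (F t x a)) ∧
  (∀ (x : Eucl n) (a : Eucl k), ∀ U : Set (Eucl n), IsOpen U →
     MeasurableSet {t | t ∈ Icc S T ∧ (F t x a ∩ U).Nonempty}) ∧
  (∃ c > (0 : ℝ), ∀ t ∈ Icc S T, ∀ a ∈ A, ∀ x : Eucl n, dist x (xbar t) ≤ δbar →
     F t x a ⊆ closedBall 0 c)

/-- Hypothesis (C2): `F(t,x,a) ⊆ F(t,x',a') + γ(|x-x'| + |a-a'|)B` near the arc, where
`γ` is a modulus of continuity. -/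
def HypC2 {n k : ℕ} (F : ℝ → Eucl n → Eucl k → Set (Eucl n)) (xbar : ℝ → Eucl n)
    (A : Set (Eucl k)) (S T δbar : ℝ) (γ : ℝ → ℝ) : Prop :=
  ContinuousOn γ (Ici 0) ∧ MonotoneOn γ (Ici 0) ∧ γ 0 = 0 ∧ (∀ r ≥ (0 : ℝ), 0 ≤ γ r) ∧
  ∀ t ∈ Icc S T, ∀ x x' : Eucl n, ∀ a ∈ A, ∀ a' ∈ A,
    dist x (xbar t) ≤ δbar → dist x' (xbar t) ≤ δbar →
    ∀ y ∈ F t x a, ∃ z ∈ F t x' a', dist y z ≤ γ (dist x x' + dist a a')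

end

section AuxStmt5

variable {n k : ℕ} {F : ℝ → Eucl n → Eucl k → Set (Eucl n)} {xbar : ℝ → Eucl n}
  {A : Set (Eucl k)}

lemma IsPartition.left_lt {a b : ℝ} {N : ℕ} {τ : ℕ → ℝ} (h : IsPartition a b N τ) :
    a < b := by
  obtain ⟨hN, h0, hNb, hstep⟩ := h
  have key : ∀ i, i ≤ N → 0 < i → τ 0 < τ i := by
    intro i
    induction i with
    | zero => intro _ h2; exact absurd h2 (lt_irrefl 0)
    | succ j ih =>
      intro hle _
      rcases Nat.eq_zero_or_pos j with hj | hj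
      · subst hj; exact hstep 0 (by omega)
      · exact (ih (by omega) hj).trans (hstep j (by omega))
  have := key N le_rfl hN
  rwa [h0, hNb] at this

lemma le_etaE {S δ ε t : ℝ} {N : ℕ} {τ : ℕ → ℝ} (hp : IsPartition S t N τ)
    (hm : MeshLE N τ ε) :
    variSum F xbar A δ N τ ≤ etaE F xbar A S δ ε t := by
  rw [etaE]
  exact le_iSup_of_le N (le_iSup_of_le τ (le_iSup_of_le hp (le_iSup_of_le hm le_rfl)))

lemma exists_uniform_partition {a b ε : ℝ} (hab : a < b) (hε : 0 < ε) :
    ∃ N τ, IsPartition a b N τ ∧ MeshLE N τ ε := by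
  have hba : 0 < b - a := sub_pos.2 hab
  set N : ℕ := ⌈(b - a) / ε⌉₊ with hNdef
  have hNpos : 0 < N := Nat.ceil_pos.2 (div_pos hba hε)
  have hNR : (0:ℝ) < (N : ℝ) := by exact_mod_cast hNpos
  have hstep : (0:ℝ) < (b - a) / N := div_pos hba hNR
  have hmesh : (b - a) / N ≤ ε := by
    rw [div_le_iff₀ hNR]
    have h1 : (b - a) / ε ≤ (N : ℝ) := Nat.le_ceil _
    rw [div_le_iff₀ hε] at h1
    linarith
  refine ⟨N, fun i => a + i * ((b - a) / N), ⟨hNpos, by simp, ?_, ?_⟩, ?_⟩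
  · field_simp; ring
  · intro i _
    have : (i : ℝ) * ((b - a) / N) < (i + 1 : ℕ) * ((b - a) / N) := by
      push_cast
      nlinarith
    linarith
  · intro i _
    have : (a + (i + 1 : ℕ) * ((b - a) / N)) - (a + (i : ℝ) * ((b - a) / N))
        = (b - a) / N := by push_cast; ring
    rw [this]
    exact hmesh

lemma concat_le_etaE {S δ ε t1 t2 : ℝ} {N : ℕ} {τ : ℕ → ℝ} {M : ℕ} {σ : ℕ → ℝ}
    (hτ : IsPartition S t1 N τ) (hτm : MeshLE N τ ε)
    (hσ : IsPartition t1 t2 M σ) (hσm : MeshLE M σ ε) :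
    variSum F xbar A δ N τ + variSum F xbar A δ M σ ≤ etaE F xbar A S δ ε t2 := by
  classical
  set ρ : ℕ → ℝ := fun i => if i ≤ N then τ i else σ (i - N) with hρdef
  have hval1 : ∀ i, i ≤ N → ρ i = τ i := fun i hi => if_pos hi
  have hval2 : ∀ i, N ≤ i → ρ i = σ (i - N) := by
    intro i hi
    rcases eq_or_lt_of_le hi with h | h
    · rw [← h, hval1 N le_rfl, hτ.2.2.1, Nat.sub_self, hσ.2.1]
    · exact if_neg (by omega)
  have hpart : IsPartition S t2 (N + M) ρ := by
    refine ⟨by have := hτ.1; omega, ?_, ?_, ?_⟩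
    · rw [hval1 0 (Nat.zero_le N), hτ.2.1]
    · rw [hval2 (N + M) (by omega), Nat.add_sub_cancel_left, hσ.2.2.1]
    · intro i hi
      by_cases hiN : i < N
      · rw [hval1 i (by omega), hval1 (i + 1) (by omega)]
        exact hτ.2.2.2 i hiN
      · have hNi : N ≤ i := by omega
        rw [hval2 i hNi, hval2 (i + 1) (by omega)]
        have he : i + 1 - N = (i - N) + 1 := by omega
        rw [he]
        exact hσ.2.2.2 (i - N) (by omega)
  have hmesh : MeshLE (N + M) ρ ε := by
    intro i hi
    by_cases hiN : i < N
    · rw [hval1 i (by omega), hval1 (i + 1) (by omega)]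
      exact hτm i hiN
    · have hNi : N ≤ i := by omega
      rw [hval2 i hNi, hval2 (i + 1) (by omega)]
      have he : i + 1 - N = (i - N) + 1 := by omega
      rw [he]
      exact hσm (i - N) (by omega)
  have hsum : variSum F xbar A δ (N + M) ρ
      = variSum F xbar A δ N τ + variSum F xbar A δ M σ := by
    rw [variSum, variSum, variSum, Finset.sum_range_add]
    congr 1
    · refine Finset.sum_congr rfl fun i hi => ?_
      rw [Finset.mem_range] at hi
      rw [hval1 i (by omega), hval1 (i + 1) (by omega)]
    · refine Finset.sum_congr rfl fun i hi => ?_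
      rw [Finset.mem_range] at hi
      rw [hval2 (N + i) (by omega), hval2 (N + i + 1) (by omega)]
      have e1 : N + i - N = i := by omega
      have e2 : N + i + 1 - N = i + 1 := by omega
      rw [e1, e2]
  rw [← hsum]
  exact le_etaE hpart hmesh

lemma etaE_mono {S δ ε t1 t2 : ℝ} (hε : 0 < ε) (h12 : t1 ≤ t2) :
    etaE F xbar A S δ ε t1 ≤ etaE F xbar A S δ ε t2 := by
  rcases eq_or_lt_of_le h12 with rfl | hlt
  · exact le_rfl
  rw [etaE]
  refine iSup_le fun N => iSup_le fun τ => iSup_le fun hp => iSup_le fun hm => ?_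
  obtain ⟨M, σ, hσ, hσm⟩ := exists_uniform_partition hlt hε
  exact le_trans le_self_add (concat_le_etaE hp hm hσ hσm)

lemma key_ineq {S δ ε t1 t2 : ℝ} (hε : 0 < ε) (hS : S ≤ t1) (hlt : t1 < t2)
    (hmesh : t2 - t1 ≤ ε) (hfin : etaE F xbar A S δ ε t2 ≠ ⊤) :
    etaE F xbar A S δ ε t1 +
      (⨆ x ∈ tube xbar t1 t2 δ, ⨆ a ∈ A, EMetric.hausdorffEdist (F t2 x a) (F t1 x a))
      ≤ etaE F xbar A S δ ε t2 := by
  classical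
  set T12 : ℝ≥0∞ :=
    ⨆ x ∈ tube xbar t1 t2 δ, ⨆ a ∈ A, EMetric.hausdorffEdist (F t2 x a) (F t1 x a)
    with hT12def
  set σ : ℕ → ℝ := fun i => if i = 0 then t1 else t2 with hσdef
  have hσ : IsPartition t1 t2 1 σ := by
    refine ⟨one_pos, by simp [hσdef], by simp [hσdef], ?_⟩
    intro i hi
    interval_cases i
    simpa [hσdef] using hlt
  have hσm : MeshLE 1 σ ε := by
    intro i hi
    interval_cases i
    simpa [hσdef] using hmesh
  have hσv : variSum F xbar A δ 1 σ = T12 := by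
    rw [variSum, Finset.sum_range_one]
    simp [hσdef, hT12def]
  have hb : T12 ≤ etaE F xbar A S δ ε t2 := by
    rcases eq_or_lt_of_le hS with rfl | hS'
    · rw [← hσv]; exact le_etaE hσ hσm
    · obtain ⟨M, τ, hτ, hτm⟩ := exists_uniform_partition hS' hε
      calc T12 ≤ variSum F xbar A δ M τ + variSum F xbar A δ 1 σ := by
            rw [hσv]; exact le_add_self
        _ ≤ etaE F xbar A S δ ε t2 := concat_le_etaE hτ hτm hσ hσm
  have hTne : T12 ≠ ⊤ := by
    intro h
    exact hfin (top_le_iff.1 (h ▸ hb))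
  have hmain : etaE F xbar A S δ ε t1 ≤ etaE F xbar A S δ ε t2 - T12 := by
    rw [etaE]
    refine iSup_le fun N => iSup_le fun τ => iSup_le fun hp => iSup_le fun hm => ?_
    refine (ENNReal.cancel_of_ne hTne).le_tsub_of_add_le_right ?_
    calc variSum F xbar A δ N τ + T12
        = variSum F xbar A δ N τ + variSum F xbar A δ 1 σ := by rw [hσv]
      _ ≤ etaE F xbar A S δ ε t2 := concat_le_etaE hp hm hσ hσm
  calc etaE F xbar A S δ ε t1 + T12 ≤ (etaE F xbar A S δ ε t2 - T12) + T12 :=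
        add_le_add hmain le_rfl
    _ = etaE F xbar A S δ ε t2 := tsub_add_cancel_of_le hb

end AuxStmt5

/-- Under (C1), (C2) and bounded variation of `F` along `x̄` uniformly
over `A`, there is a countable set `𝒜 ⊆ (S,T)` off which `t ↦ F(t,·,·)` is continuous
in Hausdorff distance, uniformly over `x ∈ x̄(t) + δB` and `a ∈ A`. -/
theorem stmt5 {n k : ℕ} (S T : ℝ) (hST : S < T)
    (A : Set (Eucl k)) (hA : IsCompact A)
    (F : ℝ → Eucl n → Eucl k → Set (Eucl n))
    (xbar : ℝ → Eucl n) (hx : ContinuousOn xbar (Icc S T))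
    (hBV : eta F xbar A S T < ⊤)
    (δbar : ℝ) (hδbar : 0 < δbar) (hfin : etaD F xbar A S δbar T < ⊤)
    (hC1 : HypC1 F xbar A S T δbar)
    (γ : ℝ → ℝ) (hC2 : HypC2 F xbar A S T δbar γ)
    (δ : ℝ) (hδ : 0 < δ) (hδδ : δ < δbar) :
    ∃ 𝒜 : Set ℝ, 𝒜.Countable ∧ 𝒜 ⊆ Ioo S T ∧
      ∀ t ∈ Ioo S T \ 𝒜,
        Tendsto (fun t' => ⨆ x ∈ closedBall (xbar t) δ, ⨆ a ∈ A,
            EMetric.hausdorffEdist (F t' x a) (F t x a))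
          (𝓝[Icc S T] t) (𝓝 0) := by
  classical
  -- Step 1: choose `ε0 > 0` with `etaE F xbar A S δbar ε0 T < ⊤`.
  obtain ⟨ε0, hε0, hM⟩ : ∃ ε0 > (0:ℝ), etaE F xbar A S δbar ε0 T < ⊤ := by
    by_contra h
    push_neg at h
    have : etaD F xbar A S δbar T = ⊤ := by
      rw [etaD]
      simp only [iInf_eq_top]
      intro ε hε
      exact top_le_iff.1 (h ε hε)
    rw [this] at hfin
    exact lt_irrefl ⊤ hfin
  -- Step 2: the monotone "variation" function `W`.
  set c : ℝ → ℝ := fun s => max S (min s T) with hcdef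
  set W : ℝ → ℝ≥0∞ := fun s => etaE F xbar A S δbar ε0 (c s) with hWdef
  have hc_mem : ∀ s, S ≤ c s ∧ c s ≤ T := by
    intro s
    constructor
    · exact le_max_left _ _
    · exact max_le hST.le (min_le_right _ _)
  have hc_eq : ∀ s ∈ Icc S T, c s = s := by
    intro s hs
    simp only [hcdef]
    rw [min_eq_left hs.2, max_eq_right hs.1]
  have hW_mono : Monotone W := by
    intro a b hab
    refine etaE_mono hε0 ?_
    exact max_le_max le_rfl (min_le_min hab le_rfl)
  have hW_ne : ∀ s, W s ≠ ⊤ := by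
    intro s
    exact (lt_of_le_of_lt (etaE_mono hε0 (hc_mem s).2) hM).ne
  have hW_eq : ∀ s ∈ Icc S T, W s = etaE F xbar A S δbar ε0 s := by
    intro s hs
    simp only [hWdef]
    rw [hc_eq s hs]
  -- Step 3: the countable exceptional set.
  refine ⟨Ioo S T ∩ {s | ¬ ContinuousAt W s}, ?_, inter_subset_left, ?_⟩
  · exact Set.Countable.mono inter_subset_right hW_mono.countable_not_continuousAt
  intro t ht
  obtain ⟨htIoo, htA⟩ := ht
  have hcont : ContinuousAt W t := by
    by_contra hc
    exact htA ⟨htIoo, hc⟩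
  rw [ENNReal.tendsto_nhds_zero]
  intro ε hε
  have hε2 : (0:ℝ≥0∞) < ε / 2 := ENNReal.half_pos hε.ne'
  have hEv1 : ∀ᶠ t' in 𝓝 t, W t' ∈ Icc (W t - ε / 2) (W t + ε / 2) :=
    ((ENNReal.tendsto_nhds (hW_ne t)).1 hcont.tendsto) (ε / 2) hε2
  have hEv2 : ∀ᶠ t' in 𝓝 t, |t' - t| ≤ ε0 := by
    filter_upwards [Metric.closedBall_mem_nhds t hε0] with u hu
    simpa [Real.dist_eq] using hu
  have hEv : ∀ᶠ t' in 𝓝[Icc S T] t,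
      (W t' ∈ Icc (W t - ε / 2) (W t + ε / 2)) ∧ |t' - t| ≤ ε0 :=
    (hEv1.and hEv2).filter_mono nhdsWithin_le_nhds
  filter_upwards [hEv, self_mem_nhdsWithin] with t' hEv' hIcc
  obtain ⟨hWmem, hdist⟩ := hEv'
  rcases lt_trichotomy t' t with hlt | heq | hgt
  · -- `t' < t`
    have hkey := key_ineq (F := F) (xbar := xbar) (A := A) hε0 hIcc.1 hlt
      (by rw [abs_sub_comm] at hdist; linarith [abs_le.1 hdist])
      (by rw [← hW_eq t ⟨htIoo.1.le, htIoo.2.le⟩]; exact hW_ne t)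
    rw [← hW_eq t' hIcc, ← hW_eq t ⟨htIoo.1.le, htIoo.2.le⟩] at hkey
    have hWt : W t ≤ W t' + ε / 2 := tsub_le_iff_right.1 hWmem.1
    have hT12 : (⨆ x ∈ tube xbar t' t δbar, ⨆ a ∈ A,
        EMetric.hausdorffEdist (F t x a) (F t' x a)) ≤ ε / 2 := by
      have h2 : W t' + (⨆ x ∈ tube xbar t' t δbar, ⨆ a ∈ A,
          EMetric.hausdorffEdist (F t x a) (F t' x a)) ≤ W t' + ε / 2 :=
        le_trans hkey hWt
      exact (ENNReal.add_le_add_iff_left (hW_ne t')).1 h2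
    refine le_trans ?_ (le_trans hT12 (le_trans ENNReal.half_le_self le_rfl))
    refine iSup_le fun x => iSup_le fun hx => iSup_le fun a => iSup_le fun ha => ?_
    have hmem : x ∈ tube xbar t' t δbar :=
      ⟨t, ⟨hlt.le, le_rfl⟩, le_trans (mem_closedBall.1 hx) hδδ.le⟩
    rw [show EMetric.hausdorffEdist (F t' x a) (F t x a) = EMetric.hausdorffEdist (F t x a) (F t' x a) from Metric.hausdorffEDist_comm]
    exact le_iSup_of_le x (le_iSup_of_le hmem (le_iSup_of_le a (le_iSup_of_le ha le_rfl)))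
  · -- `t' = t`
    subst heq
    refine iSup_le fun x => iSup_le fun _ => iSup_le fun a => iSup_le fun _ => ?_
    rw [show EMetric.hausdorffEdist (F t' x a) (F t' x a) = 0 from Metric.hausdorffEDist_self]
    exact zero_le
  · -- `t < t'`
    have hkey := key_ineq (F := F) (xbar := xbar) (A := A) hε0 htIoo.1.le hgt
      (by linarith [abs_le.1 hdist])
      (by rw [← hW_eq t' hIcc]; exact hW_ne t')
    rw [← hW_eq t ⟨htIoo.1.le, htIoo.2.le⟩, ← hW_eq t' hIcc] at hkey
    have hWt : W t' ≤ W t + ε / 2 := hWmem.2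
    have hT12 : (⨆ x ∈ tube xbar t t' δbar, ⨆ a ∈ A,
        EMetric.hausdorffEdist (F t' x a) (F t x a)) ≤ ε / 2 := by
      have h2 : W t + (⨆ x ∈ tube xbar t t' δbar, ⨆ a ∈ A,
          EMetric.hausdorffEdist (F t' x a) (F t x a)) ≤ W t + ε / 2 :=
        le_trans hkey hWt
      exact (ENNReal.add_le_add_iff_left (hW_ne t)).1 h2
    refine le_trans ?_ (le_trans hT12 ENNReal.half_le_self)
    refine iSup_le fun x => iSup_le fun hx => iSup_le fun a => iSup_le fun ha => ?_
    have hmem : x ∈ tube xbar t t' δbar :=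
      ⟨t, ⟨le_rfl, hgt.le⟩, le_trans (mem_closedBall.1 hx) hδδ.le⟩
    exact le_iSup_of_le x (le_iSup_of_le hmem (le_iSup_of_le a (le_iSup_of_le ha le_rfl)))
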